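/- arXiv:2601.16646 — 3 statements merged into one kernel-verified Lean document; each statement's English description precedes it below -/
import Mathlib

section
/- For nonnegative integers m and k with k ≤ m, the difference of products of binomial coefficients C(m,k)^2 − C(m,k−1)·C(m,k+1) equals the Narayana number N(m+1,k+1) = (1/(m+1))·C(m+1,k+1)·C(m+1,k). -/
/-- Binomial coefficient with integer lower index, with the convention that
`C a b = 0` when `b < 0` or `b > a`. -/
def intChoose (a : ℕ) (b : ℤ) : ℤ :=
  if 0 ≤ b ∧ b ≤ (a : ℤ) then (a.choose b.toNat : ℤ) else 0

open scoped Nat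

lemma intChoose_nat (a b : ℕ) : intChoose a (b : ℤ) = if b ≤ a then (a.choose b : ℤ) else 0 := by
  simp [intChoose]

/-- For `k ≤ m`, `C(m,k)^2 − C(m,k−1)·C(m,k+1) = (1/(m+1))·C(m+1,k+1)·C(m+1,k)`,
the Narayana number `N(m+1,k+1)`. -/
theorem narayana_as_binomial_difference (m k : ℕ) (hk : k ≤ m) :
    ((intChoose m k : ℚ)) ^ 2
      - (intChoose m ((k : ℤ) - 1) : ℚ) * (intChoose m ((k : ℤ) + 1) : ℚ)
    = (1 / (m + 1 : ℚ)) * ((m + 1).choose (k + 1) : ℚ) * ((m + 1).choose k : ℚ) := by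
  rcases Nat.eq_zero_or_pos k with rfl | hk0
  · -- k = 0
    have h1 : intChoose m ((0:ℕ) : ℤ) = 1 := by simp [intChoose]
    have h2 : intChoose m (((0:ℕ) : ℤ) - 1) = 0 := by simp [intChoose]
    rw [h1, h2]
    simp [Nat.choose_one_right]
    field_simp
  rcases eq_or_lt_of_le hk with rfl | hkm
  · -- k = m
    have h1 : intChoose k (k : ℤ) = 1 := by
      rw [intChoose_nat]; simp
    have h2 : intChoose k ((k : ℤ) + 1) = 0 := by
      have : ((k:ℤ) + 1) = ((k+1 : ℕ) : ℤ) := by push_cast; ring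
      rw [this, intChoose_nat]; simp
    rw [h1, h2]
    simp [Nat.choose_succ_self_right]
    field_simp
  · -- 1 ≤ k < m : write k = i+1, m = i+j+2
    obtain ⟨i, rfl⟩ : ∃ i, k = i + 1 := ⟨k - 1, (Nat.succ_pred_eq_of_pos hk0).symm⟩
    obtain ⟨j, rfl⟩ : ∃ j, m = i + j + 2 := ⟨m - i - 2, by omega⟩
    have h1 : intChoose (i+j+2) ((i+1 : ℕ) : ℤ) = ((i+j+2).choose (i+1) : ℤ) := by
      rw [intChoose_nat]; simp; omega
    have h2 : intChoose (i+j+2) (((i+1:ℕ) : ℤ) - 1) = ((i+j+2).choose i : ℤ) := by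
      have : (((i+1:ℕ):ℤ) - 1) = ((i : ℕ) : ℤ) := by push_cast; ring
      rw [this, intChoose_nat]; simp; omega
    have h3 : intChoose (i+j+2) (((i+1:ℕ) : ℤ) + 1) = ((i+j+2).choose (i+2) : ℤ) := by
      have : (((i+1:ℕ):ℤ) + 1) = ((i+2 : ℕ) : ℤ) := by push_cast; ring
      rw [this, intChoose_nat]; simp
    rw [h1, h2, h3]
    have c1 : ((i+j+2).choose (i+1) : ℚ) =
        (i+j+2)! / ((i+1)! * (j+1)!) := by
      have hs : i+j+2 - (i+1) = j+1 := by omega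
      rw [Nat.cast_choose ℚ (show i+1 ≤ i+j+2 by omega), hs]
    have c2 : ((i+j+2).choose i : ℚ) = (i+j+2)! / (i ! * (j+2)!) := by
      have hs : i+j+2 - i = j+2 := by omega
      rw [Nat.cast_choose ℚ (show i ≤ i+j+2 by omega), hs]
    have c3 : ((i+j+2).choose (i+2) : ℚ) = (i+j+2)! / ((i+2)! * j !) := by
      have hs : i+j+2 - (i+2) = j := by omega
      rw [Nat.cast_choose ℚ (show i+2 ≤ i+j+2 by omega), hs]
    have c4 : ((i+j+2+1).choose (i+1+1) : ℚ) = (i+j+3)! / ((i+2)! * (j+1)!) := by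
      have hs : i+j+2+1 - (i+1+1) = j+1 := by omega
      have hn : i+j+2+1 = i+j+3 := by omega
      rw [Nat.cast_choose ℚ (show i+1+1 ≤ i+j+2+1 by omega), hs, hn]
    have c5 : ((i+j+2+1).choose (i+1) : ℚ) = (i+j+3)! / ((i+1)! * (j+2)!) := by
      have hs : i+j+2+1 - (i+1) = j+2 := by omega
      have hn : i+j+2+1 = i+j+3 := by omega
      rw [Nat.cast_choose ℚ (show i+1 ≤ i+j+2+1 by omega), hs, hn]
    push_cast
    rw [c1, c2, c3, c4, c5]
    have e1 : ((i+1)! : ℚ) = (i+1) * i ! := by push_cast [Nat.factorial_succ]; ring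
    have e2 : ((i+2)! : ℚ) = (i+2) * (i+1) * i ! := by
      push_cast [Nat.factorial_succ (i+1), Nat.factorial_succ i]; ring
    have e3 : ((j+1)! : ℚ) = (j+1) * j ! := by push_cast [Nat.factorial_succ]; ring
    have e4 : ((j+2)! : ℚ) = (j+2) * (j+1) * j ! := by
      push_cast [Nat.factorial_succ (j+1), Nat.factorial_succ j]; ring
    have e5 : ((i+j+3)! : ℚ) = (i+j+3) * (i+j+2)! := by
      have : i+j+3 = (i+j+2)+1 := by omega
      rw [this]; push_cast [Nat.factorial_succ]; ring
    rw [e1, e2, e3, e4, e5]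
    have hi : (i ! : ℚ) ≠ 0 := by positivity
    have hj : (j ! : ℚ) ≠ 0 := by positivity
    have hij : ((i+j+2)! : ℚ) ≠ 0 := by positivity
    have h1 : (i : ℚ) + 1 ≠ 0 := by positivity
    have h2 : (i : ℚ) + 2 ≠ 0 := by positivity
    have h3 : (j : ℚ) + 1 ≠ 0 := by positivity
    have h4 : (j : ℚ) + 2 ≠ 0 := by positivity
    have h5 : (i : ℚ) + j + 3 ≠ 0 := by positivity
    field_simp
    ring
end

section
/- For all nonnegative integers m, k, j with j ≤ k ≤ m, the quantity C(m,k−j)·C(m,k+j) − C(m,k−j−1)·C(m,k+j+1) is nonnegative (log-concavity of binomial products along antidiagonals). -/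
lemma intChoose_nonneg (a : ℕ) (b : ℤ) : 0 ≤ intChoose a b := by
  unfold intChoose; split <;> positivity

lemma binom_key (m a b : ℕ) (hab : a ≤ b) :
    m.choose a * m.choose (b+1) ≤ m.choose (a+1) * m.choose b := by
  have h1 := Nat.choose_succ_right_eq m a
  have h2 := Nat.choose_succ_right_eq m b
  have hpos : 0 < (a+1)*(b+1) := by positivity
  apply Nat.le_of_mul_le_mul_right _ hpos
  calc m.choose a * m.choose (b+1) * ((a+1)*(b+1))
      = m.choose a * (m.choose (b+1) * (b+1)) * (a+1) := by ring
    _ = m.choose a * (m.choose b * (m-b)) * (a+1) := by rw [h2]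
    _ = m.choose a * m.choose b * ((m-b)*(a+1)) := by ring
    _ ≤ m.choose a * m.choose b * ((m-a)*(b+1)) := by
        apply Nat.mul_le_mul_left
        exact Nat.mul_le_mul (Nat.sub_le_sub_left hab m) (by omega)
    _ = m.choose a * (m-a) * (m.choose b * (b+1)) := by ring
    _ = m.choose (a+1) * (a+1) * (m.choose b * (b+1)) := by rw [← h1]
    _ = m.choose (a+1) * m.choose b * ((a+1)*(b+1)) := by ring

/-- Log-concavity of binomial products along antidiagonals: for `j ≤ k ≤ m`,
`C(m,k−j)·C(m,k+j) − C(m,k−j−1)·C(m,k+j+1) ≥ 0`. -/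
theorem binomial_antidiagonal_log_concave (m k j : ℕ) (hj : j ≤ k) (hk : k ≤ m) :
    0 ≤ intChoose m ((k : ℤ) - j) * intChoose m ((k : ℤ) + j)
        - intChoose m ((k : ℤ) - j - 1) * intChoose m ((k : ℤ) + j + 1) := by
  by_cases hjk : j = k
  · subst hjk
    have : intChoose m ((j : ℤ) - j - 1) = 0 := by
      unfold intChoose; rw [if_neg]; omega
    rw [this, zero_mul, sub_zero]
    exact mul_nonneg (intChoose_nonneg _ _) (intChoose_nonneg _ _)
  · have hjk' : j < k := lt_of_le_of_ne hj hjk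
    by_cases hm : (k : ℤ) + j + 1 ≤ m
    · have e1 : intChoose m ((k : ℤ) - j) = (m.choose (k - j) : ℤ) := by
        unfold intChoose
        rw [if_pos (by omega), show ((k:ℤ)-(j:ℤ)).toNat = k - j from by omega]
      have e2 : intChoose m ((k : ℤ) + j) = (m.choose (k + j) : ℤ) := by
        unfold intChoose
        rw [if_pos (by omega), show ((k:ℤ)+(j:ℤ)).toNat = k + j from by omega]
      have e3 : intChoose m ((k : ℤ) - j - 1) = (m.choose (k - j - 1) : ℤ) := by
        unfold intChoose
        rw [if_pos (by omega), show ((k:ℤ)-(j:ℤ)-1).toNat = k - j - 1 from by omega]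
      have e4 : intChoose m ((k : ℤ) + j + 1) = (m.choose (k + j + 1) : ℤ) := by
        unfold intChoose
        rw [if_pos (by omega), show ((k:ℤ)+(j:ℤ)+1).toNat = k + j + 1 from by omega]
      rw [e1, e2, e3, e4, sub_nonneg]
      have := binom_key m (k - j - 1) (k + j) (by omega)
      have heq : k - j - 1 + 1 = k - j := by omega
      rw [heq] at this
      exact_mod_cast this
    · have : intChoose m ((k : ℤ) + j + 1) = 0 := by
        unfold intChoose; rw [if_neg]; omega
      rw [this, mul_zero, sub_zero]
      exact mul_nonneg (intChoose_nonneg _ _) (intChoose_nonneg _ _)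
end

section
/- For nonnegative integers m, k with 2k+1 ≤ 2m, the telescoping identity holds: ∑_{j=0}^{k} (2j+2)·[C(m,k−j)·C(m,k+j+1) − C(m,k−j−1)·C(m,k+j+2)] = C(2m, 2k+1), i.e., the dimensions of the half-integer irreducible components sum to the dimension of ⋀^{2k+1}ℂ^{2m}. -/
lemma intChoose_eq (a : ℕ) (b : ℤ) (hb : 0 ≤ b) :
    intChoose a b = (a.choose b.toNat : ℤ) := by
  unfold intChoose
  by_cases h : b ≤ (a : ℤ)
  · simp [hb, h]
  · rw [if_neg (by tauto)]
    rw [Nat.choose_eq_zero_of_lt (by omega)]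
    simp

lemma abel_aux (f : ℕ → ℤ) (n : ℕ) :
    ∑ j ∈ Finset.range (n + 1), (2 * (j : ℤ) + 2) * (f j - f (j + 1))
      = 2 * ∑ j ∈ Finset.range (n + 1), f j - (2 * n + 2) * f (n + 1) := by
  induction n with
  | zero => simp; ring
  | succ n ih =>
    rw [Finset.sum_range_succ, ih, Finset.sum_range_succ f (n + 1)]
    push_cast
    ring

/-- The dimensions of the half-integer irreducible components of
`⋀^{2k+1}(ℂ^m ⊗ ℂ²)` sum to the total dimension `C(2m, 2k+1)`:
`∑_{j=0}^{k} (2j+2)·[C(m,k−j)·C(m,k+j+1) − C(m,k−j−1)·C(m,k+j+2)] = C(2m,2k+1)`. -/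
theorem dim_sum_half_integer_components (m k : ℕ) (h : 2 * k + 1 ≤ 2 * m) :
    ∑ j ∈ Finset.range (k + 1),
        (2 * (j : ℤ) + 2) *
          (intChoose m ((k : ℤ) - j) * intChoose m ((k : ℤ) + j + 1)
            - intChoose m ((k : ℤ) - j - 1) * intChoose m ((k : ℤ) + j + 2))
      = ((2 * m).choose (2 * k + 1) : ℤ) := by
  set f : ℕ → ℤ := fun j => intChoose m ((k : ℤ) - j) * intChoose m ((k : ℤ) + j + 1) with hf
  have hstep : ∀ j : ℕ,
      intChoose m ((k : ℤ) - j - 1) * intChoose m ((k : ℤ) + j + 2) = f (j + 1) := by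
    intro j
    simp only [hf]
    push_cast
    ring_nf
  have hsum : ∑ j ∈ Finset.range (k + 1),
        (2 * (j : ℤ) + 2) *
          (intChoose m ((k : ℤ) - j) * intChoose m ((k : ℤ) + j + 1)
            - intChoose m ((k : ℤ) - j - 1) * intChoose m ((k : ℤ) + j + 2))
      = ∑ j ∈ Finset.range (k + 1), (2 * (j : ℤ) + 2) * (f j - f (j + 1)) := by
    refine Finset.sum_congr rfl fun j _ => ?_
    rw [hstep j]
  rw [hsum, abel_aux]
  have hfk : f (k + 1) = 0 := by
    have h0 : intChoose m ((k : ℤ) - ((k + 1 : ℕ) : ℤ)) = 0 := by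
      unfold intChoose
      rw [if_neg (by push_cast; omega)]
    simp only [hf]
    rw [h0, zero_mul]
  rw [hfk, mul_zero, sub_zero]
  set g : ℕ → ℤ := fun i => ((m.choose i : ℤ) * (m.choose (2 * k + 1 - i) : ℤ)) with hg
  have hfg : ∀ j ∈ Finset.range (k + 1), f j = g (k - j) := by
    intro j hj
    simp only [Finset.mem_range] at hj
    have hj' : j ≤ k := by omega
    simp only [hf, hg]
    have e1 : ((k : ℤ) - j).toNat = k - j := by omega
    have e2 : ((k : ℤ) + j + 1).toNat = 2 * k + 1 - (k - j) := by omega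
    rw [intChoose_eq m _ (by omega), intChoose_eq m _ (by positivity), e1, e2]
  rw [Finset.sum_congr rfl hfg]
  have hrefl0 : ∑ x ∈ Finset.range (k + 1), g (k - x)
      = ∑ x ∈ Finset.range (k + 1), g x := by
    conv_rhs => rw [← Finset.sum_range_reflect g (k + 1)]
    refine Finset.sum_congr rfl fun j hj => ?_
    exact congrArg g (by omega)
  rw [hrefl0]
  have hv : ((2 * m).choose (2 * k + 1) : ℤ)
      = ∑ i ∈ Finset.range (2 * k + 2), g i := by
    have := Nat.add_choose_eq m m (2 * k + 1)
    rw [Finset.Nat.sum_antidiagonal_eq_sum_range_succ_mk] at this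
    rw [show 2 * m = m + m by ring, this]
    push_cast
    rfl
  rw [hv, show 2 * k + 2 = (k + 1) + (k + 1) by ring, Finset.sum_range_add g (k+1) (k+1)]
  have hrefl : ∑ i ∈ Finset.range (k + 1), g ((k + 1) + i)
      = ∑ i ∈ Finset.range (k + 1), g i := by
    conv_lhs => rw [← Finset.sum_range_reflect (fun i => g ((k + 1) + i)) (k + 1)]
    refine Finset.sum_congr rfl fun i hi => ?_
    simp only [Finset.mem_range] at hi
    have h1 : (k + 1) + (k + 1 - 1 - i) = 2 * k + 1 - i := by omega
    rw [h1]
    simp only [hg]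
    rw [show 2 * k + 1 - (2 * k + 1 - i) = i from by omega]
    ring
  rw [hrefl]
  ring
end
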